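/- Let (μ, μ°) ∈ C¹([0,T); L²(0,1) × ℝ) solve the quasistatic Eulerian strut equations. Define V(t) = ½ ∫_0^1 (μ(s,t) − μ°(t))² ds + κ(μ°(t)) + γ ∫_0^1 cos θ(s,t) ds, where θ(s,t) = ∫_0^s μ(ζ,t) dζ. Then d/dt V(t) = −∫_0^1 μ_t(s,t)² ds − |D̂(μ(·,t), μ°(t))| |μ°_t(t)| ≤ 0 for all t; i.e., V is a Liapunov function. -/

import Mathlib

open MeasureTheory Set

lemma contOn_fst {F : ℝ → ℝ → ℝ} {U : Set (ℝ×ℝ)}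
    (hF : ContinuousOn (fun p : ℝ×ℝ => F p.1 p.2) U) (s : ℝ) {X : Set ℝ}
    (hX : ∀ u ∈ X, (u, s) ∈ U) : ContinuousOn (fun u => F u s) X :=
  hF.comp ((continuous_id.prodMk continuous_const).continuousOn) hX

lemma contOn_snd {F : ℝ → ℝ → ℝ} {U : Set (ℝ×ℝ)}
    (hF : ContinuousOn (fun p : ℝ×ℝ => F p.1 p.2) U) (u : ℝ) {X : Set ℝ}
    (hX : ∀ s ∈ X, (u, s) ∈ U) : ContinuousOn (fun s => F u s) X :=
  hF.comp ((continuous_const.prodMk continuous_id).continuousOn) hX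

lemma param_hasDerivWithinAt {T a b : ℝ} (hab : a ≤ b) {F Ft : ℝ → ℝ → ℝ}
    (hF : ContinuousOn (fun p : ℝ × ℝ => F p.1 p.2) (Ico 0 T ×ˢ Icc a b))
    (hFt : ContinuousOn (fun p : ℝ × ℝ => Ft p.1 p.2) (Ico 0 T ×ˢ Icc a b))
    (hder : ∀ t ∈ Ico (0:ℝ) T, ∀ s ∈ Icc a b,
      HasDerivWithinAt (fun τ => F τ s) (Ft t s) (Ico 0 T) t)
    {t : ℝ} (ht : t ∈ Ico (0:ℝ) T) :
    HasDerivWithinAt (fun τ => ∫ s in a..b, F τ s) (∫ s in a..b, Ft t s) (Ico 0 T) t := by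
  obtain ⟨ht0, htT⟩ := ht
  set c : ℝ := (t + T) / 2 with hc
  have htc : t < c := by simp only [hc]; linarith
  have hcT : c < T := by simp only [hc]; linarith
  have hIcc_sub : Icc (0:ℝ) c ⊆ Ico 0 T := fun x hx => ⟨hx.1, lt_of_le_of_lt hx.2 hcT⟩
  have hK : IsCompact (Icc (0:ℝ) c ×ˢ Icc a b) := isCompact_Icc.prod isCompact_Icc
  have hKsub : Icc (0:ℝ) c ×ˢ Icc a b ⊆ Ico 0 T ×ˢ Icc a b :=
    prod_mono hIcc_sub (subset_refl _)
  have hUC : UniformContinuousOn (fun p : ℝ × ℝ => Ft p.1 p.2) (Icc (0:ℝ) c ×ˢ Icc a b) :=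
    hK.uniformContinuousOn_of_continuous (hFt.mono hKsub)
  rw [hasDerivWithinAt_iff_isLittleO, Asymptotics.isLittleO_iff]
  intro ε hε
  have hba : (0:ℝ) ≤ b - a := by linarith
  set ε' : ℝ := ε / (b - a + 1) with hε'
  have hε'pos : 0 < ε' := div_pos hε (by linarith)
  obtain ⟨δ, hδpos, hδ⟩ := Metric.uniformContinuousOn_iff.1 hUC ε' hε'pos
  set r : ℝ := min δ (c - t) with hr
  have hrpos : 0 < r := lt_min hδpos (by linarith)
  filter_upwards [self_mem_nhdsWithin,
    nhdsWithin_le_nhds (Metric.ball_mem_nhds t hrpos)] with τ hτT hτr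
  rw [Metric.mem_ball, Real.dist_eq] at hτr
  have hτδ : |τ - t| < δ := lt_of_lt_of_le hτr (min_le_left _ _)
  have hτc : τ ∈ Icc (0:ℝ) c := by
    refine ⟨hτT.1, ?_⟩
    have h1 : |τ - t| < c - t := lt_of_lt_of_le hτr (min_le_right _ _)
    linarith [le_abs_self (τ - t)]
  have htc' : t ∈ Icc (0:ℝ) c := ⟨ht0, le_of_lt htc⟩
  have hucc : uIcc t τ ⊆ Icc (0:ℝ) c := by
    rw [uIcc_eq_union]
    exact union_subset (Icc_subset_Icc htc'.1 hτc.2) (Icc_subset_Icc hτc.1 htc'.2)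
  -- FTC in parameter for each s ∈ Icc a b
  have hFTC : ∀ s ∈ Icc a b, F τ s - F t s = ∫ u in t..τ, Ft u s := by
    intro s hs
    have hcont : ContinuousOn (fun u => F u s) (uIcc t τ) :=
      contOn_fst hF s (fun u hu => ⟨hIcc_sub (hucc hu), hs⟩)
    have hint : IntervalIntegrable (fun u => Ft u s) volume t τ :=
      (contOn_fst hFt s (fun u hu => ⟨hIcc_sub (hucc hu), hs⟩)).intervalIntegrable
    have hderiv : ∀ x ∈ Ioo (min t τ) (max t τ),
        HasDerivWithinAt (fun u => F u s) (Ft x s) (Ioi x) x := by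
      intro x hx
      have hx0 : 0 < x := lt_of_le_of_lt (le_min ht0 hτc.1) hx.1
      have hxT : x < T := lt_of_lt_of_le hx.2 (le_trans (max_le htc'.2 hτc.2) (le_of_lt hcT))
      have hmem : Ico (0:ℝ) T ∈ nhds x :=
        mem_nhds_iff.2 ⟨Ioo 0 T, Ioo_subset_Ico_self, isOpen_Ioo, ⟨hx0, hxT⟩⟩
      exact ((hder x ⟨le_of_lt hx0, hxT⟩ s hs).hasDerivAt hmem).hasDerivWithinAt
    have := intervalIntegral.integral_eq_sub_of_hasDeriv_right hcont hderiv hint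
    linarith [this]
  have hIccuIcc : uIcc a b = Icc a b := uIcc_of_le hab
  have hintF : ∀ u ∈ Icc (0:ℝ) c, IntervalIntegrable (fun s => F u s) volume a b := by
    intro u hu
    exact ((contOn_snd hF u (fun s hs => ⟨hIcc_sub hu, hs⟩)).mono
      (by rw [hIccuIcc])).intervalIntegrable
  have hintFt : IntervalIntegrable (fun s => Ft t s) volume a b :=
    ((contOn_snd hFt t (fun s hs => ⟨hIcc_sub htc', hs⟩)).mono
      (by rw [hIccuIcc])).intervalIntegrable
  have hsplit : (∫ s in a..b, F τ s) - (∫ s in a..b, F t s) - (τ - t) * ∫ s in a..b, Ft t s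
      = ∫ s in a..b, (F τ s - F t s - (τ - t) * Ft t s) := by
    rw [intervalIntegral.integral_sub ((hintF τ hτc).sub (hintF t htc')) (hintFt.const_mul _),
      intervalIntegral.integral_sub (hintF τ hτc) (hintF t htc'),
      intervalIntegral.integral_const_mul]
  have hbound : ∀ s ∈ Set.uIoc a b, ‖F τ s - F t s - (τ - t) * Ft t s‖ ≤ ε' * |τ - t| := by
    intro s hs
    have hs' : s ∈ Icc a b := by
      rw [uIoc_of_le hab] at hs; exact ⟨le_of_lt hs.1, hs.2⟩
    have hintu : IntervalIntegrable (fun u => Ft u s) volume t τ :=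
      (contOn_fst hFt s (fun u hu => ⟨hIcc_sub (hucc hu), hs'⟩)).intervalIntegrable
    have h1 : F τ s - F t s - (τ - t) * Ft t s = ∫ u in t..τ, (Ft u s - Ft t s) := by
      rw [intervalIntegral.integral_sub hintu intervalIntegrable_const,
        intervalIntegral.integral_const, smul_eq_mul, hFTC s hs']
    rw [h1]
    have h2 : ∀ u ∈ Set.uIoc t τ, ‖Ft u s - Ft t s‖ ≤ ε' := by
      intro u hu
      have hu' : u ∈ Icc (0:ℝ) c := hucc (uIoc_subset_uIcc hu)
      have hut : |u - t| ≤ |τ - t| := by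
        rcases le_total t τ with h | h
        · rw [uIoc_of_le h] at hu
          rw [abs_of_nonneg (by linarith [hu.1] : (0:ℝ) ≤ u - t),
            abs_of_nonneg (by linarith : (0:ℝ) ≤ τ - t)]
          linarith [hu.2]
        · rw [uIoc_of_ge h] at hu
          rw [abs_of_nonpos (by linarith [hu.2] : u - t ≤ 0),
            abs_of_nonpos (by linarith : τ - t ≤ 0)]
          linarith [hu.1]
      have hdist : dist ((u, s) : ℝ × ℝ) ((t, s) : ℝ × ℝ) < δ := by
        rw [Prod.dist_eq, dist_self, Real.dist_eq, max_eq_left (abs_nonneg _)]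
        exact lt_of_le_of_lt hut hτδ
      have := hδ (u, s) ⟨hu', hs'⟩ (t, s) ⟨htc', hs'⟩ hdist
      rw [Real.dist_eq] at this
      exact le_of_lt this
    exact intervalIntegral.norm_integral_le_of_norm_le_const h2
  have key : ‖∫ s in a..b, (F τ s - F t s - (τ - t) * Ft t s)‖ ≤ (ε' * |τ - t|) * |b - a| :=
    intervalIntegral.norm_integral_le_of_norm_le_const hbound
  have habs : |b - a| = b - a := abs_of_nonneg hba
  simp only [smul_eq_mul]
  calc ‖(∫ s in a..b, F τ s) - (∫ s in a..b, F t s) - (τ - t) * ∫ s in a..b, Ft t s‖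
      = ‖∫ s in a..b, (F τ s - F t s - (τ - t) * Ft t s)‖ := by rw [hsplit]
    _ ≤ (ε' * |τ - t|) * |b - a| := key
    _ ≤ ε * ‖τ - t‖ := by
        rw [habs, Real.norm_eq_abs]
        have h3 : ε' * (b - a) ≤ ε := by
          rw [hε', div_mul_eq_mul_div, div_le_iff₀ (by linarith : (0:ℝ) < b - a + 1)]
          nlinarith
        nlinarith [abs_nonneg (τ - t), mul_nonneg (le_of_lt hε'pos) (abs_nonneg (τ - t))]

lemma ibp_aux {g h : ℝ → ℝ} (hg : Continuous g) (hh : Continuous h) :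
    (∫ s in (0:ℝ)..1, g s * (∫ ζ in (0:ℝ)..s, h ζ))
      = ∫ s in (0:ℝ)..1, h s * (∫ σ in s..1, g σ) := by
  set A : ℝ → ℝ := fun s => ∫ ζ in (0:ℝ)..s, h ζ with hA
  set B : ℝ → ℝ := fun s => ∫ σ in s..1, g σ with hB
  have hAc : Continuous A := intervalIntegral.continuous_primitive
    (fun a b => hh.intervalIntegrable a b) 0
  have hBc : Continuous B := by
    have h1 : Continuous fun s => ∫ σ in (1:ℝ)..s, g σ := intervalIntegral.continuous_primitive
      (fun a b => hg.intervalIntegrable a b) 1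
    have : B = fun s => -∫ σ in (1:ℝ)..s, g σ := funext fun s =>
      intervalIntegral.integral_symm 1 s
    rw [this]; exact h1.neg
  have hAd : ∀ s : ℝ, HasDerivAt A (h s) s := fun s =>
    (hh.integral_hasStrictDerivAt 0 s).hasDerivAt
  have hBd : ∀ s : ℝ, HasDerivAt B (-(g s)) s := by
    intro s
    have h1 := ((hg.integral_hasStrictDerivAt 1 s).hasDerivAt).neg
    have h2 : B = fun u => -∫ σ in (1:ℝ)..u, g σ := funext fun u =>
      intervalIntegral.integral_symm 1 u
    rw [h2]; exact h1
  have hprod : ∀ s ∈ uIcc (0:ℝ) 1, HasDerivAt (fun u => A u * B u)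
      (h s * B s - g s * A s) s := by
    intro s _
    have : HasDerivAt (fun u => A u * B u) _ s := (hAd s).mul (hBd s)
    convert this using 1; ring
  have hint : IntervalIntegrable (fun s => h s * B s - g s * A s) volume 0 1 :=
    ((hh.mul hBc).sub (hg.mul hAc)).intervalIntegrable 0 1
  have hFTC := intervalIntegral.integral_eq_sub_of_hasDerivAt hprod hint
  have hA0 : A 0 = 0 := intervalIntegral.integral_same
  have hB1 : B 1 = 0 := intervalIntegral.integral_same
  rw [hA0, hB1] at hFTC
  simp only [mul_zero, zero_mul, sub_zero] at hFTC
  have hsplit : (∫ s in (0:ℝ)..1, (h s * B s - g s * A s))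
      = (∫ s in (0:ℝ)..1, h s * B s) - ∫ s in (0:ℝ)..1, g s * A s :=
    intervalIntegral.integral_sub ((hh.mul hBc).intervalIntegrable 0 1)
      ((hg.mul hAc).intervalIntegrable 0 1)
  rw [hsplit] at hFTC
  linarith

lemma sign_aux {f Θ : ℝ → ℝ} (hf0 : ∀ x, 0 ≤ f x) (hfneg : ∀ x ≤ (0:ℝ), f x = 0)
    (hΘ : ∀ x, 0 < Θ x) (mv D v : ℝ) (hv : v = f (D - Θ mv) - f (-Θ mv - D)) :
    v * D = |D| * |v| := by
  rcases le_or_gt 0 D with hD | hD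
  · have h1 : f (-Θ mv - D) = 0 := hfneg _ (by linarith [hΘ mv])
    have h2 : 0 ≤ v := by rw [hv, h1]; simpa using hf0 _
    rw [abs_of_nonneg hD, abs_of_nonneg h2]; ring
  · have h1 : f (D - Θ mv) = 0 := hfneg _ (by linarith [hΘ mv])
    have h2 : v ≤ 0 := by rw [hv, h1]; simpa using hf0 _
    rw [abs_of_neg hD, abs_of_nonpos h2]; ring

set_option maxHeartbeats 2000000 in
/-- along any solution of the quasistatic Eulerian strut equations the
function `V(t) = ½∫₀¹(μ−μ°)² + κ(μ°) + γ∫₀¹ cos θ` is a Liapunov function: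
`V'(t) = −∫₀¹ μₜ² − |D̂| |μ°ₜ| ≤ 0`. -/
theorem stmt_9 (f Θ κ : ℝ → ℝ) (γ T : ℝ) (hT : 0 < T)
    (hf : Continuous f) (hf0 : ∀ x, 0 ≤ f x) (hfneg : ∀ x ≤ (0:ℝ), f x = 0)
    (hΘ : ∀ x, 0 < Θ x) (hκ : ContDiff ℝ 1 κ)
    (μ μt : ℝ → ℝ → ℝ) (m mt : ℝ → ℝ)
    (hμc : Continuous fun p : ℝ × ℝ => μ p.1 p.2)
    (hμtc : Continuous fun p : ℝ × ℝ => μt p.1 p.2)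
    (hmtc : Continuous mt)
    (hder : ∀ t ∈ Ico (0:ℝ) T, ∀ s ∈ Icc (0:ℝ) 1,
      HasDerivWithinAt (fun τ => μ τ s) (μt t s) (Ico 0 T) t)
    (hmder : ∀ t ∈ Ico (0:ℝ) T, HasDerivWithinAt m (mt t) (Ico 0 T) t)
    (heq : ∀ t ∈ Ico (0:ℝ) T, ∀ s ∈ Icc (0:ℝ) 1,
      μt t s = -(μ t s) + m t + γ * ∫ σ in s..1, Real.sin (∫ ζ in (0:ℝ)..σ, μ t ζ))
    (hmeq : ∀ t ∈ Ico (0:ℝ) T,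
      mt t = f (((∫ s in (0:ℝ)..1, μ t s) - m t - deriv κ (m t)) - Θ (m t))
           - f (-Θ (m t) - ((∫ s in (0:ℝ)..1, μ t s) - m t - deriv κ (m t)))) :
    ∀ t ∈ Ico (0:ℝ) T,
      HasDerivWithinAt
        (fun τ => (1/2) * (∫ s in (0:ℝ)..1, (μ τ s - m τ)^2) + κ (m τ)
          + γ * ∫ s in (0:ℝ)..1, Real.cos (∫ ζ in (0:ℝ)..s, μ τ ζ))
        (-(∫ s in (0:ℝ)..1, (μt t s)^2)
          - |(∫ s in (0:ℝ)..1, μ t s) - m t - deriv κ (m t)| * |mt t|)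
        (Ico 0 T) t
      ∧ (-(∫ s in (0:ℝ)..1, (μt t s)^2)
          - |(∫ s in (0:ℝ)..1, μ t s) - m t - deriv κ (m t)| * |mt t|) ≤ 0 := by
  -- joint continuity of θ and θt
  have hθc : Continuous fun p : ℝ × ℝ => ∫ ζ in (0:ℝ)..p.2, μ p.1 ζ :=
    intervalIntegral.continuous_parametric_primitive_of_continuous hμc
  have hθtc : Continuous fun p : ℝ × ℝ => ∫ ζ in (0:ℝ)..p.2, μt p.1 ζ :=
    intervalIntegral.continuous_parametric_primitive_of_continuous hμtc
  have hm_cont : ContinuousOn m (Ico 0 T) := fun x hx => (hmder x hx).continuousWithinAt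
  -- derivative of θ in the parameter
  have hθder : ∀ t ∈ Ico (0:ℝ) T, ∀ s ∈ Icc (0:ℝ) 1,
      HasDerivWithinAt (fun τ => ∫ ζ in (0:ℝ)..s, μ τ ζ)
        (∫ ζ in (0:ℝ)..s, μt t ζ) (Ico 0 T) t := by
    intro t ht s hs
    exact param_hasDerivWithinAt hs.1 (hμc.continuousOn) (hμtc.continuousOn)
      (fun t' ht' σ hσ => hder t' ht' σ ⟨hσ.1, le_trans hσ.2 hs.2⟩) ht
  intro t ht
  -- continuity facts at time t
  have hcμ : Continuous fun s => μ t s := hμc.comp (continuous_const.prodMk continuous_id)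
  have hcμt : Continuous fun s => μt t s := hμtc.comp (continuous_const.prodMk continuous_id)
  have hcθ : Continuous fun s => ∫ ζ in (0:ℝ)..s, μ t ζ :=
    intervalIntegral.continuous_primitive (fun a b => hcμ.intervalIntegrable a b) 0
  have hcθt : Continuous fun s => ∫ ζ in (0:ℝ)..s, μt t ζ :=
    intervalIntegral.continuous_primitive (fun a b => hcμt.intervalIntegrable a b) 0
  have hcB : Continuous fun s => ∫ σ in s..1, Real.sin (∫ ζ in (0:ℝ)..σ, μ t ζ) := by
    have h1 : Continuous fun s => ∫ σ in (1:ℝ)..s, Real.sin (∫ ζ in (0:ℝ)..σ, μ t ζ) :=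
      intervalIntegral.continuous_primitive
        (fun a b => (Real.continuous_sin.comp hcθ).intervalIntegrable a b) 1
    have h2 : (fun s => ∫ σ in s..1, Real.sin (∫ ζ in (0:ℝ)..σ, μ t ζ))
        = fun s => -∫ σ in (1:ℝ)..s, Real.sin (∫ ζ in (0:ℝ)..σ, μ t ζ) :=
      funext fun s => intervalIntegral.integral_symm 1 s
    rw [h2]; exact h1.neg
  -- derivative of the first integral
  have hI1 : HasDerivWithinAt (fun τ => ∫ s in (0:ℝ)..1, (μ τ s - m τ)^2)
      (∫ s in (0:ℝ)..1, 2*(μ t s - m t)*(μt t s - mt t)) (Ico 0 T) t := by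
    refine param_hasDerivWithinAt (F := fun τ s => (μ τ s - m τ)^2)
      (Ft := fun t s => 2*(μ t s - m t)*(μt t s - mt t)) zero_le_one ?_ ?_ ?_ ht
    · exact (hμc.continuousOn.sub
        (hm_cont.comp continuous_fst.continuousOn (fun p hp => hp.1))).pow 2
    · exact (continuousOn_const.mul (hμc.continuousOn.sub
        (hm_cont.comp continuous_fst.continuousOn (fun p hp => hp.1)))).mul
        (hμtc.continuousOn.sub (hmtc.comp continuous_fst).continuousOn)
    · intro t' ht' s hs
      have h : HasDerivWithinAt (fun τ => (μ τ s - m τ)^2) _ (Ico 0 T) t' := ((hder t' ht' s hs).sub (hmder t' ht')).pow 2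
      convert h using 1
      push_cast [Pi.sub_apply]
      ring
  -- derivative of the cosine integral
  have hI2 : HasDerivWithinAt
      (fun τ => ∫ s in (0:ℝ)..1, Real.cos (∫ ζ in (0:ℝ)..s, μ τ ζ))
      (∫ s in (0:ℝ)..1, -Real.sin (∫ ζ in (0:ℝ)..s, μ t ζ) * (∫ ζ in (0:ℝ)..s, μt t ζ))
      (Ico 0 T) t := by
    refine param_hasDerivWithinAt (F := fun τ s => Real.cos (∫ ζ in (0:ℝ)..s, μ τ ζ))
      (Ft := fun t s => -Real.sin (∫ ζ in (0:ℝ)..s, μ t ζ) * (∫ ζ in (0:ℝ)..s, μt t ζ))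
      zero_le_one ?_ ?_ ?_ ht
    · exact (Real.continuous_cos.comp hθc).continuousOn
    · exact (((Real.continuous_sin.comp hθc).neg).mul hθtc).continuousOn
    · intro t' ht' s hs
      exact (hθder t' ht' s hs).cos
  -- derivative of κ ∘ m
  have hκd : HasDerivWithinAt (fun τ => κ (m τ)) (deriv κ (m t) * mt t) (Ico 0 T) t :=
    (((hκ.differentiable one_ne_zero) (m t)).hasDerivAt).comp_hasDerivWithinAt t (hmder t ht)
  -- the equation rewritten
  have heq' : ∀ s ∈ Icc (0:ℝ) 1,
      μ t s - m t = γ * (∫ σ in s..1, Real.sin (∫ ζ in (0:ℝ)..σ, μ t ζ)) - μt t s := by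
    intro s hs
    have := heq t ht s hs
    linarith
  -- integration by parts
  have hIBP : (∫ s in (0:ℝ)..1,
        Real.sin (∫ ζ in (0:ℝ)..s, μ t ζ) * (∫ ζ in (0:ℝ)..s, μt t ζ))
      = ∫ s in (0:ℝ)..1, μt t s * (∫ σ in s..1, Real.sin (∫ ζ in (0:ℝ)..σ, μ t ζ)) :=
    ibp_aux (Real.continuous_sin.comp hcθ) hcμt
  -- compute the first integral
  have hEq1 : (∫ s in (0:ℝ)..1, 2*(μ t s - m t)*(μt t s - mt t))
      = 2*γ*(∫ s in (0:ℝ)..1, μt t s * (∫ σ in s..1, Real.sin (∫ ζ in (0:ℝ)..σ, μ t ζ)))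
        - 2*(∫ s in (0:ℝ)..1, (μt t s)^2)
        - 2*(mt t)*((∫ s in (0:ℝ)..1, μ t s) - m t) := by
    have hcongr : EqOn (fun s => 2*(μ t s - m t)*(μt t s - mt t))
        (fun s => 2*γ*(μt t s * (∫ σ in s..1, Real.sin (∫ ζ in (0:ℝ)..σ, μ t ζ)))
          - 2*(μt t s)^2 - 2*(mt t)*(μ t s - m t)) (uIcc 0 1) := by
      intro s hs
      rw [uIcc_of_le zero_le_one] at hs
      simp only
      rw [heq' s hs]
      ring
    rw [intervalIntegral.integral_congr hcongr]
    have i1 : IntervalIntegrable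
        (fun s => 2*γ*(μt t s * (∫ σ in s..1, Real.sin (∫ ζ in (0:ℝ)..σ, μ t ζ)))) volume 0 1 :=
      (continuous_const.mul (hcμt.mul hcB)).intervalIntegrable 0 1
    have i2 : IntervalIntegrable (fun s => 2*(μt t s)^2) volume 0 1 :=
      (continuous_const.mul (hcμt.pow 2)).intervalIntegrable 0 1
    have i3 : IntervalIntegrable (fun s => 2*(mt t)*(μ t s - m t)) volume 0 1 :=
      (continuous_const.mul (hcμ.sub continuous_const)).intervalIntegrable 0 1
    rw [intervalIntegral.integral_sub (i1.sub i2) i3, intervalIntegral.integral_sub i1 i2,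
      intervalIntegral.integral_const_mul, intervalIntegral.integral_const_mul,
      intervalIntegral.integral_const_mul,
      intervalIntegral.integral_sub (hcμ.intervalIntegrable 0 1) intervalIntegrable_const,
      intervalIntegral.integral_const]
    simp
  -- compute the cosine-derivative integral
  have hEq2 : (∫ s in (0:ℝ)..1,
        -Real.sin (∫ ζ in (0:ℝ)..s, μ t ζ) * (∫ ζ in (0:ℝ)..s, μt t ζ))
      = -(∫ s in (0:ℝ)..1, μt t s * (∫ σ in s..1, Real.sin (∫ ζ in (0:ℝ)..σ, μ t ζ))) := by
    rw [← hIBP]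
    have : (fun s => -Real.sin (∫ ζ in (0:ℝ)..s, μ t ζ) * (∫ ζ in (0:ℝ)..s, μt t ζ))
        = fun s => -(Real.sin (∫ ζ in (0:ℝ)..s, μ t ζ) * (∫ ζ in (0:ℝ)..s, μt t ζ)) :=
      funext fun s => by ring
    rw [this, intervalIntegral.integral_neg]
  -- sign identity
  have hsign : mt t * ((∫ s in (0:ℝ)..1, μ t s) - m t - deriv κ (m t))
      = |(∫ s in (0:ℝ)..1, μ t s) - m t - deriv κ (m t)| * |mt t| :=
    sign_aux hf0 hfneg hΘ (m t) _ _ (hmeq t ht)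
  -- assemble
  have hVal : (-(∫ s in (0:ℝ)..1, (μt t s)^2)
        - |(∫ s in (0:ℝ)..1, μ t s) - m t - deriv κ (m t)| * |mt t|)
      = 1/2 * (∫ s in (0:ℝ)..1, 2*(μ t s - m t)*(μt t s - mt t)) + deriv κ (m t) * mt t
        + γ * (∫ s in (0:ℝ)..1,
            -Real.sin (∫ ζ in (0:ℝ)..s, μ t ζ) * (∫ ζ in (0:ℝ)..s, μt t ζ)) := by
    rw [hEq1, hEq2, ← hsign]
    ring
  constructor
  · rw [hVal]
    exact ((hI1.const_mul (1/2 : ℝ)).add hκd).add (hI2.const_mul γ)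
  · have h1 : 0 ≤ ∫ s in (0:ℝ)..1, (μt t s)^2 :=
      intervalIntegral.integral_nonneg zero_le_one (fun s _ => sq_nonneg _)
    have h2 : 0 ≤ |(∫ s in (0:ℝ)..1, μ t s) - m t - deriv κ (m t)| * |mt t| :=
      mul_nonneg (abs_nonneg _) (abs_nonneg _)
    linarith
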